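/- Let P ⊂ ℝ^n and Q ⊂ ℝ^m be full-dimensional convex lattice polytopes each containing the origin in its interior, and suppose P is reflexive. Then the free sum satisfies NVol_{n+m}(P ⊕ Q) = NVol_n(P) · NVol_m(Q). -/

import Mathlib

open MeasureTheory
open Set Pointwise

section Body
variable {d : ℕ} {K : Set (Fin d → ℝ)}

lemma body_nhds (hK0 : (0 : Fin d → ℝ) ∈ interior K) : K ∈ nhds 0 :=
  mem_interior_iff_mem_nhds.1 hK0

lemma body_absorbent (hK0 : (0 : Fin d → ℝ) ∈ interior K) : Absorbent ℝ K :=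
  absorbent_nhds_zero (body_nhds hK0)

lemma body_vonN (hKc : IsCompact K) : Bornology.IsVonNBounded ℝ K :=
  NormedSpace.isVonNBounded_of_isBounded _ hKc.isBounded

lemma body_gauge_eq_zero (hKc : IsCompact K) (hK0 : (0 : Fin d → ℝ) ∈ interior K) {x : Fin d → ℝ}
    (h : gauge K x = 0) : x = 0 :=
  (gauge_eq_zero (body_absorbent hK0) (body_vonN hKc)).1 h

lemma body_mem_iff (hKv : Convex ℝ K) (hKc : IsCompact K) (hK0 : (0 : Fin d → ℝ) ∈ interior K)
    {x : Fin d → ℝ} : x ∈ K ↔ gauge K x ≤ 1 := by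
  constructor
  · exact gauge_le_one_of_mem
  · intro h
    have := (gauge_le_one_iff_mem_closure hKv (body_nhds hK0)).1 h
    rwa [hKc.isClosed.closure_eq] at this

lemma body_levelset (hKv : Convex ℝ K) (hKc : IsCompact K) (hK0 : (0 : Fin d → ℝ) ∈ interior K)
    {t : ℝ} (ht : 0 < t) : {x | gauge K x ≤ t} = t • K := by
  ext x
  rw [Set.mem_smul_set_iff_inv_smul_mem₀ ht.ne']
  rw [body_mem_iff hKv hKc hK0, gauge_smul_of_nonneg (inv_nonneg.2 ht.le), smul_eq_mul,
    inv_mul_le_iff₀ ht, mul_one, Set.mem_setOf_eq]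

lemma body_sublevel_lt (hKv : Convex ℝ K) (hK0 : (0 : Fin d → ℝ) ∈ interior K)
    {t : ℝ} (ht : 0 < t) : {x | gauge K x < t} = t • interior K := by
  rw [← gauge_lt_one_eq_interior hKv (body_nhds hK0)]
  ext x
  rw [Set.mem_smul_set_iff_inv_smul_mem₀ ht.ne', Set.mem_setOf_eq, Set.mem_setOf_eq,
    gauge_smul_of_nonneg (inv_nonneg.2 ht.le), smul_eq_mul, inv_mul_lt_iff₀ ht, mul_one]

lemma body_vol_interior (hKv : Convex ℝ K) (hKc : IsCompact K) :
    volume (interior K) = volume K := by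
  refine le_antisymm (measure_mono interior_subset) ?_
  calc volume K ≤ volume (interior K ∪ frontier K) := by
        refine measure_mono ?_
        rw [← closure_eq_interior_union_frontier]
        exact subset_closure
    _ ≤ volume (interior K) + volume (frontier K) := measure_union_le _ _
    _ = volume (interior K) := by rw [hKv.addHaar_frontier volume, add_zero]

lemma body_vol_levelset (hKv : Convex ℝ K) (hKc : IsCompact K)
    (hK0 : (0 : Fin d → ℝ) ∈ interior K) {t : ℝ} (ht : 0 < t) :
    volume {x | gauge K x ≤ t} = ENNReal.ofReal (t ^ d) * volume K := by
  rw [body_levelset hKv hKc hK0 ht, Measure.addHaar_smul_of_nonneg volume ht.le,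
    Module.finrank_fin_fun]

lemma body_vol_sublevel_lt (hKv : Convex ℝ K) (hKc : IsCompact K)
    (hK0 : (0 : Fin d → ℝ) ∈ interior K) {t : ℝ} (ht : 0 < t) :
    volume {x | gauge K x < t} = ENNReal.ofReal (t ^ d) * volume K := by
  rw [body_sublevel_lt hKv hK0 ht, Measure.addHaar_smul_of_nonneg volume ht.le,
    Module.finrank_fin_fun, body_vol_interior hKv hKc]

lemma convex_combo3 {E : Type*} [AddCommGroup E] [Module ℝ E] {s : Set E} (hs : Convex ℝ s)
    {p q r : E} (hp : p ∈ s) (hq : q ∈ s) (hr : r ∈ s) {a b c : ℝ}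
    (ha : 0 ≤ a) (hb : 0 ≤ b) (hc : 0 ≤ c) (habc : a + b + c = 1) :
    a • p + b • q + c • r ∈ s := by
  rcases eq_or_lt_of_le (by positivity : (0:ℝ) ≤ a + b) with hab | hab
  · have ha0 : a = 0 := by linarith
    have hb0 : b = 0 := by linarith
    have hc1 : c = 1 := by linarith
    simpa [ha0, hb0, hc1] using hr
  · have hw : (a / (a + b)) • p + (b / (a + b)) • q ∈ s :=
      hs hp hq (by positivity) (by positivity) (by field_simp)
    have key : (a + b) • ((a / (a + b)) • p + (b / (a + b)) • q) + c • r ∈ s :=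
      hs hw hr hab.le hc (by linarith)
    have h1 : (a + b) * (a / (a + b)) = a := by field_simp
    have h2 : (a + b) * (b / (a + b)) = b := by field_simp
    rwa [smul_add, smul_smul, smul_smul, h1, h2] at key

section FreeSum
variable {d m : ℕ} {P : Set (Fin d → ℝ)} {Q : Set (Fin m → ℝ)}
  (hPv : Convex ℝ P) (hPc : IsCompact P) (hP0 : (0 : Fin d → ℝ) ∈ interior P)
  (hQv : Convex ℝ Q) (hQc : IsCompact Q) (hQ0 : (0 : Fin m → ℝ) ∈ interior Q)

include hPv hPc hP0 hQv hQc hQ0 in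
lemma freeSum_eq :
    convexHull ℝ ((fun p => (p, (0 : Fin m → ℝ))) '' P ∪ (fun q => ((0 : Fin d → ℝ), q)) '' Q) =
      {z : (Fin d → ℝ) × (Fin m → ℝ) | gauge P z.1 + gauge Q z.2 ≤ 1} := by
  apply le_antisymm
  · apply convexHull_min
    · rintro z (⟨p, hp, rfl⟩ | ⟨q, hq, rfl⟩) <;> simp only [Set.mem_setOf_eq, gauge_zero]
      · simpa using gauge_le_one_of_mem hp
      · simpa using gauge_le_one_of_mem hq
    · rintro z hz w hw a b ha hb hab
      simp only [Set.mem_setOf_eq, Prod.fst_add, Prod.snd_add, Prod.smul_fst, Prod.smul_snd] at *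
      have g1 := gauge_add_le hPv (body_absorbent hP0) (a • z.1) (b • w.1)
      have g2 := gauge_add_le hQv (body_absorbent hQ0) (a • z.2) (b • w.2)
      rw [gauge_smul_of_nonneg ha, gauge_smul_of_nonneg hb, smul_eq_mul, smul_eq_mul] at g1
      rw [gauge_smul_of_nonneg ha, gauge_smul_of_nonneg hb, smul_eq_mul, smul_eq_mul] at g2
      nlinarith [gauge_nonneg (s := P) z.1, gauge_nonneg (s := P) w.1,
        gauge_nonneg (s := Q) z.2, gauge_nonneg (s := Q) w.2]
  · rintro ⟨x, y⟩ (h : gauge P x + gauge Q y ≤ 1)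
    set a := gauge P x with hadef
    set b := gauge Q y with hbdef
    have ha : 0 ≤ a := gauge_nonneg x
    have hb : 0 ≤ b := gauge_nonneg y
    obtain ⟨x', hx', hxx⟩ : ∃ x' ∈ P, x = a • x' := by
      rcases eq_or_lt_of_le ha with ha0 | ha0
      · have hx0 : x = 0 := body_gauge_eq_zero hPc hP0 (hadef ▸ ha0.symm)
        exact ⟨0, interior_subset hP0, by rw [hx0, smul_zero]⟩
      · refine ⟨a⁻¹ • x, ?_, (smul_inv_smul₀ ha0.ne' x).symm⟩
        rw [body_mem_iff hPv hPc hP0, gauge_smul_of_nonneg (inv_nonneg.2 ha), smul_eq_mul,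
          ← hadef, inv_mul_cancel₀ ha0.ne']
    obtain ⟨y', hy', hyy⟩ : ∃ y' ∈ Q, y = b • y' := by
      rcases eq_or_lt_of_le hb with hb0 | hb0
      · have hy0 : y = 0 := body_gauge_eq_zero hQc hQ0 (hbdef ▸ hb0.symm)
        exact ⟨0, interior_subset hQ0, by rw [hy0, smul_zero]⟩
      · refine ⟨b⁻¹ • y, ?_, (smul_inv_smul₀ hb0.ne' y).symm⟩
        rw [body_mem_iff hQv hQc hQ0, gauge_smul_of_nonneg (inv_nonneg.2 hb), smul_eq_mul,
          ← hbdef, inv_mul_cancel₀ hb0.ne']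
    have hmem : a • ((x', 0) : (Fin d → ℝ) × (Fin m → ℝ)) + b • ((0, y') : _ × _)
        + (1 - a - b) • (((0 : Fin d → ℝ), (0 : Fin m → ℝ)) : _ × _) ∈
        convexHull ℝ ((fun p => (p, (0 : Fin m → ℝ))) '' P ∪ (fun q => ((0 : Fin d → ℝ), q)) '' Q) := by
      apply convex_combo3 (convex_convexHull ℝ _)
      · exact subset_convexHull ℝ _ (Or.inl ⟨x', hx', rfl⟩)
      · exact subset_convexHull ℝ _ (Or.inr ⟨y', hy', rfl⟩)
      · exact subset_convexHull ℝ _ (Or.inl ⟨0, interior_subset hP0, by simp⟩)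
      · exact ha
      · exact hb
      · linarith
      · ring
    convert hmem using 1
    rw [Prod.ext_iff]
    constructor <;> simp [hxx, hyy]
end FreeSum

lemma prod_fact (a b : ℕ) :
    a.factorial * ∏ j ∈ Finset.range (b + 1), (a + 1 + j) = (a + b + 1).factorial := by
  have hprod : ∀ k : ℕ, (a + 1).ascFactorial k = ∏ j ∈ Finset.range k, (a + 1 + j) := by
    intro k
    induction k with
    | zero => simp
    | succ n ih => rw [Nat.ascFactorial_succ, Finset.prod_range_succ, ih, mul_comm]
  have h := Nat.factorial_mul_ascFactorial a (b + 1)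
  rwa [hprod, show a + (b + 1) = a + b + 1 by ring] at h

lemma beta_nat (a b : ℕ) : ∫ u in (0:ℝ)..1, u ^ a * (1 - u) ^ b =
    (a.factorial * b.factorial : ℝ) / (a + b + 1).factorial := by
  have h1 : Complex.betaIntegral (a + 1) (b + 1) =
      ((∫ u in (0:ℝ)..1, u ^ a * (1 - u) ^ b : ℝ) : ℂ) := by
    rw [Complex.betaIntegral, ← intervalIntegral.integral_ofReal]
    apply intervalIntegral.integral_congr
    intro x _
    push_cast
    rw [show (a:ℂ) + 1 - 1 = (a:ℂ) by ring, show (b:ℂ) + 1 - 1 = (b:ℂ) by ring,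
      Complex.cpow_natCast, Complex.cpow_natCast]
  have h2 : Complex.betaIntegral (a + 1) (b + 1) =
      (b.factorial : ℂ) / ∏ j ∈ Finset.range (b + 1), ((a : ℂ) + 1 + j) := by
    have := Complex.betaIntegral_eval_nat_add_one_right
      (u := (a : ℂ) + 1) (by simp; positivity) b
    simpa using this
  have h3 : (∏ j ∈ Finset.range (b + 1), ((a : ℂ) + 1 + j)) =
      ((a + b + 1).factorial : ℂ) / (a.factorial : ℂ) := by
    rw [eq_div_iff (by exact_mod_cast Nat.factorial_ne_zero a)]
    rw [mul_comm]
    exact_mod_cast congrArg (Nat.cast : ℕ → ℂ) (prod_fact a b)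
  rw [h3] at h2
  rw [h2] at h1
  have hfac : ((a + b + 1).factorial : ℂ) ≠ 0 := by exact_mod_cast Nat.factorial_ne_zero _
  have hfa : ((a).factorial : ℂ) ≠ 0 := by exact_mod_cast Nat.factorial_ne_zero _
  have : ((∫ u in (0:ℝ)..1, u ^ a * (1 - u) ^ b : ℝ) : ℂ) =
      ((a.factorial * b.factorial : ℝ) / ((a + b + 1).factorial : ℝ) : ℂ) := by
    rw [← h1]
    push_cast
    field_simp
  exact_mod_cast this

lemma I_eval (d k : ℕ) :
    ∫ t in (0:ℝ)..1, (1 - t ^ (((k + 1 : ℕ) : ℝ)⁻¹)) ^ d =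
      ((d.factorial * (k + 1).factorial : ℕ) : ℝ) / ((d + k + 1).factorial : ℝ) := by
  have hg : Continuous fun u : ℝ => (1 - u ^ (((k + 1 : ℕ) : ℝ)⁻¹)) ^ d := by
    apply Continuous.pow
    exact continuous_const.sub (Real.continuous_rpow_const (by positivity))
  have hderiv : ∀ x ∈ Set.uIcc (0:ℝ) 1, HasDerivAt (fun x : ℝ => x ^ (k + 1))
      (((k + 1 : ℕ) : ℝ) * x ^ k) x := by
    intro x _
    simpa using hasDerivAt_pow (k + 1) x
  have hcont : Continuous fun x : ℝ => ((k + 1 : ℕ) : ℝ) * x ^ k := by continuity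
  have hsub := intervalIntegral.integral_comp_smul_deriv hderiv hcont.continuousOn hg
  simp only [one_pow, zero_pow (Nat.succ_ne_zero k)] at hsub
  rw [← hsub]
  have hcongr : ∫ x in (0:ℝ)..1, (((k + 1 : ℕ) : ℝ) * x ^ k) •
        (1 - (x ^ (k + 1)) ^ (((k + 1 : ℕ) : ℝ)⁻¹)) ^ d =
      ∫ x in (0:ℝ)..1, ((k + 1 : ℕ) : ℝ) * (x ^ k * (1 - x) ^ d) := by
    apply intervalIntegral.integral_congr
    intro x hx
    rw [Set.uIcc_of_le (by norm_num : (0:ℝ) ≤ 1)] at hx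
    simp only [Function.comp_apply, smul_eq_mul,
      Real.pow_rpow_inv_natCast hx.1 (Nat.succ_ne_zero k)]
    ring
  simp only [Function.comp_apply] at hcongr ⊢
  rw [hcongr, intervalIntegral.integral_const_mul, beta_nat k d]
  have h1 : ((k + d + 1).factorial : ℝ) ≠ 0 := by exact_mod_cast Nat.factorial_ne_zero _
  rw [show d + k + 1 = k + d + 1 by ring, Nat.factorial_succ (k)]
  push_cast
  field_simp

section Layercake
variable {d : ℕ} {K : Set (Fin d → ℝ)}

lemma body_A (hKv : Convex ℝ K) (hKc : IsCompact K) (hK0 : (0 : Fin d → ℝ) ∈ interior K)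
    (m : ℕ) :
    ∫⁻ x in K, ENNReal.ofReal ((1 - gauge K x) ^ m) =
      volume K * ENNReal.ofReal (((d.factorial * m.factorial : ℕ) : ℝ) /
        (((d + m).factorial : ℕ) : ℝ)) := by
  have hKmeas : MeasurableSet K := hKc.isClosed.measurableSet
  have hgc : Continuous (gauge K) := continuous_gauge hKv (body_nhds hK0)
  rcases Nat.eq_zero_or_pos m with rfl | hm
  · simp only [pow_zero, Nat.factorial_zero, mul_one, Nat.add_zero]
    rw [ENNReal.ofReal_one, div_self (by exact_mod_cast Nat.factorial_ne_zero d),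
      ENNReal.ofReal_one, mul_one]
    simp [lintegral_const, Measure.restrict_apply MeasurableSet.univ]
  obtain ⟨k, rfl⟩ : ∃ k, m = k + 1 := ⟨m - 1, by omega⟩
  set c : ℝ := (((k + 1 : ℕ)) : ℝ)⁻¹ with hc
  set f : (Fin d → ℝ) → ℝ := fun x => (1 - gauge K x) ^ (k + 1) with hf
  have hfc : Continuous f := (continuous_const.sub hgc).pow _
  have f_nn : 0 ≤ᵐ[volume.restrict K] f := by
    refine ae_restrict_of_forall_mem hKmeas (fun x hx => ?_)
    have h1 : (0:ℝ) ≤ 1 - gauge K x := by linarith [gauge_le_one_of_mem hx]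
    exact pow_nonneg h1 _
  have lc := lintegral_eq_lintegral_meas_lt (volume.restrict K) f_nn hfc.aemeasurable
  rw [hf] at lc
  rw [lc]
  have hpoint : ∀ t ∈ Set.Ioi (0:ℝ),
      (volume.restrict K) {a | t < f a} =
        Set.indicator (Set.Ioo (0:ℝ) 1)
          (fun t => ENNReal.ofReal ((1 - t ^ c) ^ d) * volume K) t := by
    intro t ht
    have ht0 : 0 < t := ht
    rw [Measure.restrict_apply (measurableSet_lt measurable_const hfc.measurable)]
    rcases lt_or_ge t 1 with ht1 | ht1
    · have hc0 : 0 < c := by rw [hc]; positivity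
      have hs0 : 0 < 1 - t ^ c := by
        have := Real.rpow_lt_one ht0.le ht1 hc0
        linarith
      have hset : {a | t < f a} ∩ K = {x | gauge K x < 1 - t ^ c} := by
        ext x
        simp only [Set.mem_inter_iff, Set.mem_setOf_eq, hf]
        constructor
        · rintro ⟨htf, hxK⟩
          have hg1 : gauge K x ≤ 1 := gauge_le_one_of_mem hxK
          have hgnn : (0:ℝ) ≤ 1 - gauge K x := by linarith
          have := Real.rpow_lt_rpow ht0.le htf hc0
          rwa [hc, Real.pow_rpow_inv_natCast hgnn (Nat.succ_ne_zero k), ← hc,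
            lt_sub_iff_add_lt, ← lt_sub_iff_add_lt'] at this
        · intro hgx
          have hg1 : gauge K x < 1 := by
            have : t ^ c ≥ 0 := Real.rpow_nonneg ht0.le c
            linarith
          refine ⟨?_, (body_mem_iff hKv hKc hK0).2 hg1.le⟩
          have h2 : t ^ c < 1 - gauge K x := by linarith
          have h3 := pow_lt_pow_left₀ h2 (Real.rpow_nonneg ht0.le c) (Nat.succ_ne_zero k)
          rwa [hc, Real.rpow_inv_natCast_pow ht0.le (Nat.succ_ne_zero k)] at h3
      rw [hset, body_vol_sublevel_lt hKv hKc hK0 hs0,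
        Set.indicator_of_mem (Set.mem_Ioo.2 ⟨ht0, ht1⟩)]
    · have hempty : {a | t < f a} ∩ K = ∅ := by
        ext x
        simp only [Set.mem_inter_iff, Set.mem_setOf_eq, Set.mem_empty_iff_false, iff_false,
          not_and, hf]
        intro htf hxK
        have hg1 : gauge K x ≤ 1 := gauge_le_one_of_mem hxK
        have hgnn : (0:ℝ) ≤ 1 - gauge K x := by linarith
        have hg0 : (0:ℝ) ≤ gauge K x := gauge_nonneg x
        have : (1 - gauge K x) ^ (k + 1) ≤ 1 := pow_le_one₀ hgnn (by linarith)
        linarith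
      rw [hempty, Set.indicator_of_notMem (by simp [Set.mem_Ioo]; intro h; linarith)]
      simp
  rw [setLIntegral_congr_fun measurableSet_Ioi
    hpoint]
  rw [lintegral_indicator measurableSet_Ioo, Measure.restrict_restrict measurableSet_Ioo,
    Set.inter_eq_left.2 (fun x hx => hx.1)]
  have hInt : ∫⁻ t in Set.Ioo (0:ℝ) 1, ENNReal.ofReal ((1 - t ^ c) ^ d) =
      ENNReal.ofReal (((d.factorial * (k + 1).factorial : ℕ) : ℝ) /
        (((d + (k + 1)).factorial : ℕ) : ℝ)) := by
    have hgcont : Continuous fun t : ℝ => (1 - t ^ c) ^ d := by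
      apply Continuous.pow
      exact continuous_const.sub (Real.continuous_rpow_const (by rw [hc]; positivity))
    have hint : IntegrableOn (fun t : ℝ => (1 - t ^ c) ^ d) (Set.Ioo 0 1) :=
      (hgcont.integrableOn_Icc (a := 0) (b := 1)).mono_set Set.Ioo_subset_Icc_self
    rw [← MeasureTheory.ofReal_integral_eq_lintegral_ofReal hint]
    · congr 1
      have : ∫ t in Set.Ioo (0:ℝ) 1, (1 - t ^ c) ^ d =
          ∫ t in (0:ℝ)..1, (1 - t ^ c) ^ d := by
        rw [intervalIntegral.integral_of_le (by norm_num : (0:ℝ) ≤ 1),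
          ← MeasureTheory.integral_Ioc_eq_integral_Ioo]
      rw [this, hc, I_eval d k]
      norm_num [show d + (k + 1) = d + k + 1 by ring]
    · refine ae_restrict_of_forall_mem measurableSet_Ioo (fun t ht => ?_)
      have : t ^ c < 1 := Real.rpow_lt_one ht.1.le ht.2 (by rw [hc]; positivity)
      exact pow_nonneg (by linarith) _
  rw [lintegral_mul_const' _ _ (IsCompact.measure_lt_top hKc).ne, hInt, mul_comm]
end Layercake


/-- A lattice polytope in `ℝ^d`: the convex hull of finitely many points of `ℤ^d`. -/
def IsLatticePolytope {d : ℕ} (P : Set (Fin d → ℝ)) : Prop :=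
  ∃ V : Finset (Fin d → ℝ),
    (∀ v ∈ V, ∀ i, ∃ z : ℤ, v i = (z : ℝ)) ∧ P = convexHull ℝ (V : Set (Fin d → ℝ))

/-- Let `P ⊂ ℝ^d` and `Q ⊂ ℝ^m` be full-dimensional convex lattice polytopes each containing the
origin in its interior, and suppose `P` is reflexive (its dual
`P* = {x : ⟨x,p⟩ ≥ -1 for all p ∈ P}` is also a lattice polytope).  Then the free sum
`P ⊕ Q = conv((P × {0}) ∪ ({0} × Q))` satisfies `NVol(P ⊕ Q) = NVol(P) · NVol(Q)`. -/
theorem nvol_freeSum (d m : ℕ) (P : Set (Fin d → ℝ)) (Q : Set (Fin m → ℝ))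
    (hP : IsLatticePolytope P) (hQ : IsLatticePolytope Q)
    (hP0 : (0 : Fin d → ℝ) ∈ interior P) (hQ0 : (0 : Fin m → ℝ) ∈ interior Q)
    (hPrefl : IsLatticePolytope {x : Fin d → ℝ | ∀ p ∈ P, -1 ≤ ∑ i, x i * p i}) :
    ((d + m).factorial : ENNReal) *
        volume (convexHull ℝ
          ((fun p => (p, (0 : Fin m → ℝ))) '' P ∪ (fun q => ((0 : Fin d → ℝ), q)) '' Q)) =
      ((d.factorial : ENNReal) * volume P) * ((m.factorial : ENNReal) * volume Q) := by
  obtain ⟨VP, -, hVP⟩ := hP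
  obtain ⟨VQ, -, hVQ⟩ := hQ
  have hPc : IsCompact P := hVP ▸ VP.finite_toSet.isCompact_convexHull (𝕜 := ℝ)
  have hQc : IsCompact Q := hVQ ▸ VQ.finite_toSet.isCompact_convexHull (𝕜 := ℝ)
  have hPv : Convex ℝ P := hVP ▸ convex_convexHull ℝ _
  have hQv : Convex ℝ Q := hVQ ▸ convex_convexHull ℝ _
  clear hVP hVQ hPrefl
  rw [freeSum_eq hPv hPc hP0 hQv hQc hQ0]
  set T : Set ((Fin d → ℝ) × (Fin m → ℝ)) :=
    {z | gauge P z.1 + gauge Q z.2 ≤ 1} with hT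
  have hgP : Continuous (gauge P) := continuous_gauge hPv (body_nhds hP0)
  have hgQ : Continuous (gauge Q) := continuous_gauge hQv (body_nhds hQ0)
  have hTmeas : MeasurableSet T := by
    apply IsClosed.measurableSet
    exact isClosed_le ((hgP.comp continuous_fst).add (hgQ.comp continuous_snd)) continuous_const
  have hPmeas : MeasurableSet P := hPc.isClosed.measurableSet
  have hvolT : volume T = ∫⁻ x, volume (Prod.mk x ⁻¹' T) := by
    rw [MeasureTheory.Measure.volume_eq_prod, MeasureTheory.Measure.prod_apply hTmeas]
  have hslice : ∀ᵐ x : Fin d → ℝ, volume (Prod.mk x ⁻¹' T) =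
      Set.indicator P (fun x => ENNReal.ofReal ((1 - gauge P x) ^ m) * volume Q) x := by
    have hnull : volume {x : Fin d → ℝ | gauge P x = 1} = 0 := by
      refine measure_mono_null (fun x hx => ?_) (hPv.addHaar_frontier volume)
      exact (gauge_eq_one_iff_mem_frontier hPv (body_nhds hP0)).1 hx
    rw [MeasureTheory.ae_iff]
    refine measure_mono_null (fun x hx => ?_) hnull
    simp only [Set.mem_setOf_eq] at hx ⊢
    by_contra hne
    apply hx
    have hpre : Prod.mk x ⁻¹' T = {y | gauge Q y ≤ 1 - gauge P x} := by
      ext y; simp only [Set.mem_preimage, hT, Set.mem_setOf_eq]; constructor <;> intro <;> linarith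
    rcases lt_or_gt_of_ne hne with hlt | hgt
    · have hs0 : 0 < 1 - gauge P x := by linarith
      rw [hpre, body_vol_levelset hQv hQc hQ0 hs0,
        Set.indicator_of_mem ((body_mem_iff hPv hPc hP0).2 hlt.le)]
    · have hxP : x ∉ P := fun hxP => by
        have := gauge_le_one_of_mem hxP; linarith
      have hempty : Prod.mk x ⁻¹' T = ∅ := by
        rw [hpre]
        ext y
        simp only [Set.mem_setOf_eq, Set.mem_empty_iff_false, iff_false, not_le]
        have := gauge_nonneg (s := Q) y
        linarith
      rw [hempty, Set.indicator_of_notMem hxP]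
      simp
  rw [hvolT, lintegral_congr_ae hslice, lintegral_indicator hPmeas,
    lintegral_mul_const' _ _ (IsCompact.measure_lt_top hQc).ne, body_A hPv hPc hP0 m]
  have hc : ((d + m).factorial : ENNReal) *
      ENNReal.ofReal (((d.factorial * m.factorial : ℕ) : ℝ) / (((d + m).factorial : ℕ) : ℝ)) =
      (d.factorial : ENNReal) * (m.factorial : ENNReal) := by
    rw [← ENNReal.ofReal_natCast ((d + m).factorial), ← ENNReal.ofReal_mul (by positivity),
      mul_div_cancel₀ _ (show (((d + m).factorial : ℕ) : ℝ) ≠ 0 by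
        exact_mod_cast Nat.factorial_ne_zero (d + m)), ENNReal.ofReal_natCast]
    push_cast
    ring
  calc ((d + m).factorial : ENNReal) *
        (volume P * ENNReal.ofReal (((d.factorial * m.factorial : ℕ) : ℝ) /
          (((d + m).factorial : ℕ) : ℝ)) * volume Q) =
      (((d + m).factorial : ENNReal) *
        ENNReal.ofReal (((d.factorial * m.factorial : ℕ) : ℝ) /
          (((d + m).factorial : ℕ) : ℝ))) * (volume P * volume Q) := by ring
    _ = ((d.factorial : ENNReal) * (m.factorial : ENNReal)) * (volume P * volume Q) := by
        rw [hc]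
    _ = ((d.factorial : ENNReal) * volume P) * ((m.factorial : ENNReal) * volume Q) := by ring
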